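/- Let p ≥ 1 and β > 0, let Λ ⊂ ℤ² be finite with zero boundary condition, and let γ₁,…,γ_m be contours with Λ_{γ_i} ⊆ Λ whose interiors Λ_{γ_i} are pairwise disjoint and such that for all i ≠ j the exterior boundary ∂⁻_{γ_i} is disjoint from Λ_{γ_j}. Then for all integers h₁,…,h_m, hatπ^{p,0}_Λ(∩_{i=1}^m C_{γ_i,h_i}) ≤ exp(−β Σ_{i=1}^m |γ_i|). -/

import Mathlib

open scoped BigOperators Classical

noncomputable section

namespace PSOS

/-- Sites of the square lattice `ℤ²`. -/
abbrev Site : Type := ℤ × ℤ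

/-- The nearest-neighbour edges incident to `x`, each written in its normalized
(right/up oriented) form, so that every unordered pair appears in a unique way. -/
def edgesAt (x : Site) : Finset (Site × Site) :=
  {(x, (x.1 + 1, x.2)), (x, (x.1, x.2 + 1)),
   ((x.1 - 1, x.2), x), ((x.1, x.2 - 1), x)}

/-- Nearest-neighbour edges of `ℤ²` with at least one endpoint in `Λ`,
each unordered pair appearing exactly once. -/
def edges (Λ : Finset Site) : Finset (Site × Site) := Λ.biUnion edgesAt

/-- Extension `ξ` of a configuration `η : Λ → ℤ` by the boundary condition `φ` off `Λ`. -/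
def extend (Λ : Finset Site) (φ : Site → ℤ) (η : Λ → ℤ) : Site → ℤ :=
  fun x => if h : x ∈ Λ then η ⟨x, h⟩ else φ x

/-- The `p`-SOS Hamiltonian `H^{p,φ}_Λ` on `Λ` with boundary condition `φ`. -/
def ham (p : ℝ) (Λ : Finset Site) (φ : Site → ℤ) (η : Λ → ℤ) : ℝ :=
  ∑ e ∈ edges Λ, (|extend Λ φ η e.1 - extend Λ φ η e.2| : ℝ) ^ p

/-- Boltzmann weight `exp(-β H^{p,φ}_Λ(η))`. -/
def weight (p β : ℝ) (Λ : Finset Site) (φ : Site → ℤ) (η : Λ → ℤ) : ℝ :=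
  Real.exp (-β * ham p Λ φ η)

/-- Finite-volume Gibbs probability `hatπ^{p,φ}_Λ(A)` of an event `A ⊆ ℤ^Λ`. -/
def gibbs (p β : ℝ) (Λ : Finset Site) (φ : Site → ℤ) (A : Set (Λ → ℤ)) : ℝ :=
  (∑' η : A, weight p β Λ φ η) / (∑' η : (Λ → ℤ), weight p β Λ φ η)

/-- Gibbs expectation of an observable under `hatπ^{p,φ}_Λ`. -/
def gibbsExp (p β : ℝ) (Λ : Finset Site) (φ : Site → ℤ) (f : (Λ → ℤ) → ℝ) : ℝ :=
  (∑' η : (Λ → ℤ), f η * weight p β Λ φ η) / (∑' η : (Λ → ℤ), weight p β Λ φ η)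

/-- The floor event `{η : η_x ≥ 0 for all x ∈ Λ}`. -/
def floorSet (Λ : Finset Site) : Set (Λ → ℤ) := {η | ∀ x, 0 ≤ η x}

/-- The event `{η : 0 ≤ η_x ≤ n for all x ∈ Λ}` (floor at `0`, ceiling at `n`). -/
def boxSet (Λ : Finset Site) (n : ℕ) : Set (Λ → ℤ) :=
  {η | ∀ x, 0 ≤ η x ∧ η x ≤ (n : ℤ)}

/-- `barπ^{p,0}_Λ`: the Gibbs measure with zero boundary condition conditioned
on the floor event. -/
def barGibbs (p β : ℝ) (Λ : Finset Site) (A : Set (Λ → ℤ)) : ℝ :=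
  gibbs p β Λ 0 (A ∩ floorSet Λ) / gibbs p β Λ 0 (floorSet Λ)

/-- `π^{p,0}_Λ`: the Gibbs measure with zero boundary condition conditioned on
having floor at `0` and ceiling at `n`. -/
def ceilGibbs (p β : ℝ) (Λ : Finset Site) (n : ℕ) (A : Set (Λ → ℤ)) : ℝ :=
  gibbs p β Λ 0 (A ∩ boxSet Λ n) / gibbs p β Λ 0 (boxSet Λ n)

/-- The nearest-neighbour graph on `ℤ²`. -/
def nbrGraph : SimpleGraph Site where
  Adj x y := (x.1 - y.1).natAbs + (x.2 - y.2).natAbs = 1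
  symm := ⟨fun x y (hxy : (x.1 - y.1).natAbs + (x.2 - y.2).natAbs = 1) =>
    show (y.1 - x.1).natAbs + (y.2 - x.2).natAbs = 1 by omega⟩
  loopless := ⟨fun x (h : (x.1 - x.1).natAbs + (x.2 - x.2).natAbs = 1) => by omega⟩

/-- The four nearest neighbours of a site. -/
def nbrs (x : Site) : Finset Site :=
  {(x.1 + 1, x.2), (x.1 - 1, x.2), (x.1, x.2 + 1), (x.1, x.2 - 1)}

/-- A contour `γ` of the dual lattice `(ℤ²)*`, identified with the finite region
`Λ_γ ⊆ ℤ²` of sites it encloses: the region is nonempty and connected with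
connected complement, so that its edge boundary is a single closed dual circuit
(consistently with the standard linking rule at dual vertices). -/
structure Contour where
  interior : Finset Site
  nonempty : interior.Nonempty
  conn : (nbrGraph.induce (interior : Set Site)).Connected
  coconn : (nbrGraph.induce ((interior : Set Site)ᶜ)).Connected

/-- The nearest-neighbour edges crossing the boundary of `S`, oriented from
inside to outside; these correspond to the bonds of the dual circuit bounding `S`. -/
def bdryEdges (S : Finset Site) : Finset (Site × Site) :=
  S.biUnion fun x => ((nbrs x).filter fun y => y ∉ S).image fun y => (x, y)

/-- `|γ|`: the number of bonds of the contour `γ`. -/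
def Contour.len (γ : Contour) : ℕ := (bdryEdges γ.interior).card

/-- `∂⁺_γ`: sites of the interior adjacent to the exterior. -/
def innerBdry (S : Finset Site) : Finset Site :=
  S.filter fun x => ∃ y ∈ nbrs x, y ∉ S

/-- `∂⁻_γ`: sites of the exterior adjacent to the interior. -/
def outerBdry (S : Finset Site) : Finset Site :=
  (S.biUnion nbrs).filter fun y => y ∉ S

/-- The event `C_{γ,h}` that `γ` is an `h`-contour: the extended configuration `ξ`
is at least `h` on `∂⁺_γ` and at most `h - 1` on `∂⁻_γ`. -/
def contourEvent (Λ : Finset Site) (φ : Site → ℤ) (γ : Contour) (h : ℤ) :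
    Set (Λ → ℤ) :=
  {η | (∀ x ∈ innerBdry γ.interior, h ≤ extend Λ φ η x) ∧
       (∀ y ∈ outerBdry γ.interior, extend Λ φ η y ≤ h - 1)}

/-- The map `T_γ` lowering the configuration by `1` inside the contour `γ`. -/
def lower (Λ : Finset Site) (γ : Contour) (η : Λ → ℤ) : Λ → ℤ :=
  fun x => if (x : Site) ∈ γ.interior then η x - 1 else η x

/-- An event is increasing if it is upward closed for the pointwise order. -/
def IncrEvent (Λ : Finset Site) (E : Set (Λ → ℤ)) : Prop :=
  ∀ η η' : Λ → ℤ, (∀ x, η x ≤ η' x) → η ∈ E → η' ∈ E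



/-! ### Auxiliary machinery for the Peierls bound -/

/-- Normalized form of a nearest-neighbour edge: endpoint of smaller coordinate
sum first. -/
def normE (e : Site × Site) : Site × Site :=
  if e.1.1 + e.1.2 ≤ e.2.1 + e.2.2 then e else (e.2, e.1)

lemma normE_cases (e : Site × Site) : normE e = e ∨ normE e = (e.2, e.1) := by
  unfold normE; split <;> simp

lemma mem_nbrs {x y : Site} :
    y ∈ nbrs x ↔ y = (x.1 + 1, x.2) ∨ y = (x.1 - 1, x.2) ∨
      y = (x.1, x.2 + 1) ∨ y = (x.1, x.2 - 1) := by
  simp [nbrs]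

lemma normE_mem_edgesAt {x y : Site} (hy : y ∈ nbrs x) : normE (x, y) ∈ edgesAt x := by
  rw [mem_nbrs] at hy
  unfold normE
  rcases hy with rfl | rfl | rfl | rfl
  · rw [if_pos (show _ ≤ _ by dsimp only; omega)]; simp [edgesAt]
  · rw [if_neg (show ¬ _ ≤ _ by dsimp only; omega)]; simp [edgesAt]
  · rw [if_pos (show _ ≤ _ by dsimp only; omega)]; simp [edgesAt]
  · rw [if_neg (show ¬ _ ≤ _ by dsimp only; omega)]; simp [edgesAt]

lemma mem_edges_elim {Λ : Finset Site} {e : Site × Site} (he : e ∈ edges Λ) :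
    e.2 ∈ nbrs e.1 ∧ e.1 ∈ nbrs e.2 ∧ e.1.1 + e.1.2 + 1 = e.2.1 + e.2.2 := by
  simp only [edges, Finset.mem_biUnion] at he
  obtain ⟨x, -, he⟩ := he
  simp only [edgesAt, Finset.mem_insert, Finset.mem_singleton] at he
  rcases he with rfl | rfl | rfl | rfl <;>
    refine ⟨?_, ?_, by dsimp only; omega⟩ <;> rw [mem_nbrs] <;>
    simp [Prod.ext_iff] <;> omega

lemma normE_self {Λ : Finset Site} {e : Site × Site} (he : e ∈ edges Λ) : normE e = e := by
  have h := (mem_edges_elim he).2.2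
  unfold normE; rw [if_pos (by omega)]

lemma normE_swap_self {Λ : Finset Site} {e : Site × Site} (he : e ∈ edges Λ) :
    normE (e.2, e.1) = e := by
  have h := (mem_edges_elim he).2.2
  unfold normE
  rw [if_neg (show ¬ _ ≤ _ by dsimp only; omega)]

lemma eq_or_swap_of_normE_eq {a b : Site × Site} (h : normE a = normE b) :
    a = b ∨ (a.1 = b.2 ∧ a.2 = b.1) := by
  rcases normE_cases a with ha | ha <;> rcases normE_cases b with hb | hb <;>
    rw [ha, hb] at h <;> simp [Prod.ext_iff] at h ⊢ <;> tauto

lemma mem_bdryEdges {S : Finset Site} {e : Site × Site} :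
    e ∈ bdryEdges S ↔ e.1 ∈ S ∧ e.2 ∈ nbrs e.1 ∧ e.2 ∉ S := by
  simp only [bdryEdges, Finset.mem_biUnion, Finset.mem_image, Finset.mem_filter]
  constructor
  · rintro ⟨x, hx, y, ⟨hy, hyS⟩, rfl⟩; exact ⟨hx, hy, hyS⟩
  · rintro ⟨h1, h2, h3⟩; exact ⟨e.1, h1, e.2, ⟨h2, h3⟩, rfl⟩

/-- Superadditivity `a^p + 1 ≤ (a+1)^p` for `a ≥ 0`, `p ≥ 1`. -/
lemma rpow_gain {p : ℝ} (hp : 1 ≤ p) {a : ℝ} (ha : 0 ≤ a) : a ^ p + 1 ≤ (a + 1) ^ p := by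
  have h := NNReal.add_rpow_le_rpow_add a.toNNReal 1 hp
  rw [NNReal.one_rpow] at h
  have h2 := NNReal.coe_le_coe.2 h
  rwa [NNReal.coe_add, NNReal.coe_rpow, NNReal.coe_rpow, NNReal.coe_add, NNReal.coe_one,
    Real.coe_toNNReal a ha] at h2

/-- The union of the interiors of the contours. -/
def interiors {m : ℕ} (γ : Fin m → Contour) : Finset Site :=
  Finset.univ.biUnion fun i => (γ i).interior

lemma mem_interiors {m : ℕ} {γ : Fin m → Contour} {z : Site} :
    z ∈ interiors γ ↔ ∃ i, z ∈ (γ i).interior := by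
  simp [interiors]

/-- The normalized crossing edges of all the contours. -/
def crossE {m : ℕ} (γ : Fin m → Contour) : Finset (Site × Site) :=
  Finset.univ.biUnion fun i => (bdryEdges (γ i).interior).image normE

/-- The map lowering the configuration by `1` inside every contour. -/
def lowerAll (Λ : Finset Site) {m : ℕ} (γ : Fin m → Contour) (η : Λ → ℤ) : Λ → ℤ :=
  fun x => if (x : Site) ∈ interiors γ then η x - 1 else η x

lemma lowerAll_inj (Λ : Finset Site) {m : ℕ} (γ : Fin m → Contour) :
    Function.Injective (lowerAll Λ γ) := by
  intro η η' hh
  funext x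
  have := congrFun hh x
  unfold lowerAll at this
  split at this <;> omega

lemma extend_lowerAll (Λ : Finset Site) {m : ℕ} (γ : Fin m → Contour)
    (hsub : ∀ i, (γ i).interior ⊆ Λ) (η : Λ → ℤ) (z : Site) :
    extend Λ 0 (lowerAll Λ γ η) z
      = extend Λ 0 η z - (if z ∈ interiors γ then 1 else 0) := by
  by_cases hz : z ∈ Λ
  · simp only [extend, lowerAll, dif_pos hz]
    split <;> ring
  · have hzI : z ∉ interiors γ := by
      intro hI
      obtain ⟨i, hi⟩ := mem_interiors.1 hI
      exact hz (hsub i hi)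
    simp [extend, dif_neg hz, hzI]

lemma outer_not_interiors {m : ℕ} {γ : Fin m → Contour}
    (hext : ∀ i j, i ≠ j → Disjoint (outerBdry (γ i).interior) (γ j).interior)
    {i : Fin m} {x y : Site} (hx : x ∈ (γ i).interior) (hy : y ∈ nbrs x)
    (hyi : y ∉ (γ i).interior) : y ∉ interiors γ := by
  rw [mem_interiors]
  rintro ⟨j, hj⟩
  by_cases hij : i = j
  · exact hyi (hij ▸ hj)
  · have hyo : y ∈ outerBdry (γ i).interior :=
      Finset.mem_filter.2 ⟨Finset.mem_biUnion.2 ⟨x, hx, hy⟩, hyi⟩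
    exact Finset.disjoint_left.1 (hext i j hij) hyo hj

lemma crossE_subset {m : ℕ} {γ : Fin m → Contour} {Λ : Finset Site}
    (hsub : ∀ i, (γ i).interior ⊆ Λ) : crossE γ ⊆ edges Λ := by
  intro e he
  simp only [crossE, Finset.mem_biUnion, Finset.mem_image] at he
  obtain ⟨i, -, a, ha, rfl⟩ := he
  rw [mem_bdryEdges] at ha
  have h1 := normE_mem_edgesAt ha.2.1
  exact Finset.mem_biUnion.2 ⟨a.1, hsub i ha.1, by rwa [Prod.mk.eta] at h1⟩

lemma card_crossE {m : ℕ} {γ : Fin m → Contour}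
    (hdisj : ∀ i j, i ≠ j → Disjoint (γ i).interior (γ j).interior)
    (hext : ∀ i j, i ≠ j → Disjoint (outerBdry (γ i).interior) (γ j).interior) :
    (crossE γ).card = ∑ i, (γ i).len := by
  unfold crossE
  rw [Finset.card_biUnion]
  · refine Finset.sum_congr rfl fun i _ => ?_
    rw [Contour.len, Finset.card_image_of_injOn]
    intro a ha b hb hab
    rw [Finset.mem_coe, mem_bdryEdges] at ha hb
    rcases eq_or_swap_of_normE_eq hab with hh | ⟨h1, h2⟩
    · exact hh
    · exact absurd (h1 ▸ ha.1) hb.2.2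
  · intro i _ j _ hij
    rw [Function.onFun, Finset.disjoint_left]
    rintro e he1 he2
    simp only [Finset.mem_image] at he1 he2
    obtain ⟨a, ha, hae⟩ := he1
    obtain ⟨b, hb, hbe⟩ := he2
    rw [mem_bdryEdges] at ha hb
    rcases eq_or_swap_of_normE_eq (hae.trans hbe.symm) with hh | ⟨h1, h2⟩
    · exact Finset.disjoint_left.1 (hdisj i j hij) ha.1 (hh ▸ hb.1)
    · exact outer_not_interiors hext ha.1 ha.2.1 ha.2.2
        (mem_interiors.2 ⟨j, h2 ▸ hb.1⟩)

lemma edge_bound {p : ℝ} (hp : 1 ≤ p) {Λ : Finset Site} {m : ℕ}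
    {γ : Fin m → Contour} {h : Fin m → ℤ}
    (hsub : ∀ i, (γ i).interior ⊆ Λ)
    (hext : ∀ i j, i ≠ j → Disjoint (outerBdry (γ i).interior) (γ j).interior)
    (η : Λ → ℤ) (hA : ∀ i, η ∈ contourEvent Λ 0 (γ i) (h i))
    {e : Site × Site} (he : e ∈ edges Λ) :
    (|extend Λ 0 (lowerAll Λ γ η) e.1 - extend Λ 0 (lowerAll Λ γ η) e.2| : ℝ) ^ p
      + (if e ∈ crossE γ then (1 : ℝ) else 0)
      ≤ (|extend Λ 0 η e.1 - extend Λ 0 η e.2| : ℝ) ^ p := by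
  obtain ⟨hn1, hn2, hsum⟩ := mem_edges_elim he
  rw [extend_lowerAll Λ γ hsub η e.1, extend_lowerAll Λ γ hsub η e.2]
  by_cases heB : e ∈ crossE γ
  · rw [if_pos heB]
    simp only [crossE, Finset.mem_biUnion, Finset.mem_image] at heB
    obtain ⟨i, -, a, ha, hae⟩ := heB
    rw [mem_bdryEdges] at ha
    obtain ⟨ha1, ha2, ha3⟩ := ha
    have ha2I : a.2 ∉ interiors γ := outer_not_interiors hext ha1 ha2 ha3
    have ha1I : a.1 ∈ interiors γ := mem_interiors.2 ⟨i, ha1⟩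
    have hx : h i ≤ extend Λ 0 η a.1 :=
      (hA i).1 a.1 (Finset.mem_filter.2 ⟨ha1, ⟨a.2, ha2, ha3⟩⟩)
    have hy : extend Λ 0 η a.2 ≤ h i - 1 :=
      (hA i).2 a.2 (Finset.mem_filter.2 ⟨Finset.mem_biUnion.2 ⟨a.1, ha1, ha2⟩, ha3⟩)
    set u := extend Λ 0 η a.1 with hu
    set v := extend Λ 0 η a.2 with hv
    have hd : 1 ≤ u - v := by omega
    have hdr : (1 : ℝ) ≤ (u : ℝ) - (v : ℝ) := by exact_mod_cast hd
    have key : |(u : ℝ) - v - 1| ^ p + 1 ≤ |(u : ℝ) - v| ^ p := by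
      rw [abs_of_nonneg (by linarith : (0:ℝ) ≤ (u : ℝ) - v - 1),
        abs_of_nonneg (by linarith : (0:ℝ) ≤ (u : ℝ) - v)]
      have := rpow_gain hp (by linarith : (0:ℝ) ≤ (u : ℝ) - v - 1)
      calc ((u : ℝ) - v - 1) ^ p + 1 ≤ ((u : ℝ) - v - 1 + 1) ^ p := this
        _ = ((u : ℝ) - v) ^ p := by ring_nf
    rcases normE_cases a with hc | hc
    · rw [hc] at hae
      subst hae
      rw [if_pos ha1I, if_neg ha2I, ← hu, ← hv]
      push_cast
      rw [show (u : ℝ) - 1 - ((v : ℝ) - 0) = (u : ℝ) - v - 1 by ring]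
      exact key
    · rw [hc] at hae
      subst hae
      simp only
      rw [if_pos ha1I, if_neg ha2I, ← hu, ← hv]
      push_cast
      rw [show (v : ℝ) - 0 - ((u : ℝ) - 1) = -((u : ℝ) - v - 1) by ring,
        show (v : ℝ) - (u : ℝ) = -((u : ℝ) - v) by ring, abs_neg, abs_neg]
      exact key
  · rw [if_neg heB, add_zero]
    have hind : (if e.1 ∈ interiors γ then (1:ℤ) else 0)
        = (if e.2 ∈ interiors γ then (1:ℤ) else 0) := by
      by_cases h1 : e.1 ∈ interiors γ <;> by_cases h2 : e.2 ∈ interiors γ <;>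
        simp only [h1, h2, if_pos, if_neg, if_true, if_false]
      · exfalso
        obtain ⟨i, hi⟩ := mem_interiors.1 h1
        have h2i : e.2 ∉ (γ i).interior := fun hc => h2 (mem_interiors.2 ⟨i, hc⟩)
        apply heB
        refine Finset.mem_biUnion.2 ⟨i, Finset.mem_univ i, Finset.mem_image.2
          ⟨(e.1, e.2), mem_bdryEdges.2 ⟨hi, hn1, h2i⟩, ?_⟩⟩
        rw [Prod.mk.eta]
        exact normE_self he
      · exfalso
        obtain ⟨i, hi⟩ := mem_interiors.1 h2
        have h1i : e.1 ∉ (γ i).interior := fun hc => h1 (mem_interiors.2 ⟨i, hc⟩)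
        apply heB
        refine Finset.mem_biUnion.2 ⟨i, Finset.mem_univ i, Finset.mem_image.2
          ⟨(e.2, e.1), mem_bdryEdges.2 ⟨hi, hn2, h1i⟩, ?_⟩⟩
        exact normE_swap_self he
    rw [hind]
    have h3 : ((extend Λ 0 η e.1 - if e.2 ∈ interiors γ then (1:ℤ) else 0 : ℤ) : ℝ)
        - ((extend Λ 0 η e.2 - if e.2 ∈ interiors γ then (1:ℤ) else 0 : ℤ) : ℝ)
        = ((extend Λ 0 η e.1 : ℤ) : ℝ) - ((extend Λ 0 η e.2 : ℤ) : ℝ) := by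
      push_cast
      ring
    rw [h3]

lemma ham_bound {p : ℝ} (hp : 1 ≤ p) {Λ : Finset Site} {m : ℕ}
    {γ : Fin m → Contour} {h : Fin m → ℤ}
    (hsub : ∀ i, (γ i).interior ⊆ Λ)
    (hdisj : ∀ i j, i ≠ j → Disjoint (γ i).interior (γ j).interior)
    (hext : ∀ i j, i ≠ j → Disjoint (outerBdry (γ i).interior) (γ j).interior)
    (η : Λ → ℤ) (hA : ∀ i, η ∈ contourEvent Λ 0 (γ i) (h i)) :
    ham p Λ 0 (lowerAll Λ γ η) + ∑ i, ((γ i).len : ℝ) ≤ ham p Λ 0 η := by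
  have hfilter : (edges Λ).filter (fun e => e ∈ crossE γ) = crossE γ := by
    apply Finset.ext
    intro e
    simp only [Finset.mem_filter]
    exact ⟨fun hh => hh.2, fun hh => ⟨crossE_subset hsub hh, hh⟩⟩
  have hL : ∑ i, ((γ i).len : ℝ)
      = ∑ e ∈ edges Λ, (if e ∈ crossE γ then (1:ℝ) else 0) := by
    rw [Finset.sum_boole, hfilter, card_crossE hdisj hext]
    push_cast
    rfl
  rw [hL]
  unfold ham
  rw [← Finset.sum_add_distrib]
  exact Finset.sum_le_sum fun e he => edge_bound hp hsub hext η hA he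

/-- Peierls bound for several disjoint contours: if the interiors
`Λ_{γ_i}` are pairwise disjoint and the exterior boundary `∂⁻_{γ_i}` of each
contour is disjoint from the interior of every other, then
`hatπ^{p,0}_Λ(∩_i C_{γ_i,h_i}) ≤ exp(-β Σ_i |γ_i|)`. -/
theorem statement_4 (p β : ℝ) (hp : 1 ≤ p) (hβ : 0 < β)
    (Λ : Finset Site) (m : ℕ) (γ : Fin m → Contour) (h : Fin m → ℤ)
    (hsub : ∀ i, (γ i).interior ⊆ Λ)
    (hdisj : ∀ i j, i ≠ j → Disjoint (γ i).interior (γ j).interior)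
    (hext : ∀ i j, i ≠ j → Disjoint (outerBdry (γ i).interior) (γ j).interior) :
    gibbs p β Λ 0 (⋂ i, contourEvent Λ 0 (γ i) (h i)) ≤
      Real.exp (-β * ∑ i, ((γ i).len : ℝ)) := by
  classical
  set f : (Λ → ℤ) → ℝ := weight p β Λ 0 with hf
  have hfpos : ∀ η, 0 < f η := fun η => Real.exp_pos _
  by_cases hS : Summable f
  · have hZpos : 0 < ∑' η : (Λ → ℤ), f η :=
      Summable.tsum_pos hS (fun η => (hfpos η).le) 0 (hfpos 0)
    set c := Real.exp (-β * ∑ i, ((γ i).len : ℝ)) with hc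
    have hwb : ∀ η : (Λ → ℤ), (∀ i, η ∈ contourEvent Λ 0 (γ i) (h i)) →
        f η ≤ c * f (lowerAll Λ γ η) := by
      intro η hA
      have hham := ham_bound hp hsub hdisj hext η hA
      rw [hf, hc]
      unfold weight
      rw [← Real.exp_add]
      apply Real.exp_le_exp.2
      have h2 := mul_le_mul_of_nonneg_left hham hβ.le
      nlinarith
    have key : (∑' η : (⋂ i, contourEvent Λ 0 (γ i) (h i)), f η)
        ≤ ∑' η : (Λ → ℤ), c * f η := by
      apply Summable.tsum_le_tsum_of_inj
        (fun a : (⋂ i, contourEvent Λ 0 (γ i) (h i)) => lowerAll Λ γ a.val)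
      · exact (lowerAll_inj Λ γ).comp Subtype.val_injective
      · intro cc _
        have hcpos : 0 < c := by rw [hc]; exact Real.exp_pos _
        exact mul_nonneg hcpos.le (hfpos cc).le
      · intro a
        exact hwb a.val (fun i => Set.mem_iInter.1 a.2 i)
      · exact hS.subtype _
      · exact hS.mul_left c
    rw [tsum_mul_left] at key
    unfold gibbs
    rw [div_le_iff₀ hZpos]
    exact key
  · unfold gibbs
    rw [tsum_eq_zero_of_not_summable hS, div_zero]
    exact (Real.exp_pos _).le


end PSOS
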